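/- Let ρ > 0, c ∈ ℝⁿ, and let f ∈ C²(ℝⁿ, ℝ). Assume a ∈ ∂B_ρ(c) (i.e. ‖a − c‖ = ρ) is a global minimizer of f on the closed ball B_ρ(c). Then there exists an affine (degree at most 1) polynomial g : ℝⁿ → ℝ with g(a) = f(a) and f(x) ≤ g(x) for all x ∈ B_ρ(c). -/

import Mathlib

open scoped RealInnerProductSpace

/-- Lemma: if `f ∈ C²(ℝⁿ,ℝ)` attains its global minimum on the closed ball `B_ρ(c)` at
a boundary point `a` (with `‖a - c‖ = ρ`), then there is an affine polynomial
`g(x) = ⟪v, x⟫ + b` with `g(a) = f(a)` and `f ≤ g` on `B_ρ(c)`. -/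
theorem stmt14 {n : ℕ} (ρ : ℝ) (hρ : 0 < ρ)
    (c : EuclideanSpace ℝ (Fin n))
    (f : EuclideanSpace ℝ (Fin n) → ℝ) (hf : ContDiff ℝ 2 f)
    (a : EuclideanSpace ℝ (Fin n)) (ha : ‖a - c‖ = ρ)
    (hmin : ∀ x ∈ Metric.closedBall c ρ, f a ≤ f x) :
    ∃ (v : EuclideanSpace ℝ (Fin n)) (b : ℝ),
      f a = ⟪v, a⟫ + b ∧
      ∀ x ∈ Metric.closedBall c ρ, f x ≤ ⟪v, x⟫ + b := by
  classical
  set B := Metric.closedBall c ρ with hB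
  have haB : a ∈ B := by
    simp [hB, Metric.mem_closedBall, dist_eq_norm, ha]
  -- first derivative
  set D : EuclideanSpace ℝ (Fin n) → (EuclideanSpace ℝ (Fin n) →L[ℝ] ℝ) := fderiv ℝ f with hD
  have hfd : Differentiable ℝ f := hf.differentiable (by norm_num)
  have hD1 : ContDiff ℝ 1 D := hf.fderiv_right (by norm_num)
  have hDd : Differentiable ℝ D := hD1.differentiable (by norm_num)
  -- bound the second derivative on the compact ball
  have hcomp : IsCompact B := isCompact_closedBall c ρ
  have hcont : ContinuousOn (fun z => ‖fderiv ℝ D z‖) B :=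
    ((hD1.continuous_fderiv (by norm_num)).norm).continuousOn
  obtain ⟨K0, hK0⟩ : ∃ K0, ∀ z ∈ B, ‖fderiv ℝ D z‖ ≤ K0 := by
    rcases B.eq_empty_or_nonempty with h | h
    · exact ⟨0, by simp [h]⟩
    · obtain ⟨z, hz, hzmax⟩ := hcomp.exists_isMaxOn h hcont
      exact ⟨‖fderiv ℝ D z‖, fun y hy => hzmax hy⟩
  set K : ℝ := max K0 0 with hK
  have hKnn : 0 ≤ K := le_max_right _ _
  have hKb : ∀ z ∈ B, ‖fderiv ℝ D z‖ ≤ K := fun z hz => (hK0 z hz).trans (le_max_left _ _)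
  -- D is K-Lipschitz on B
  have hconv : Convex ℝ B := convex_closedBall c ρ
  have hLip : ∀ z ∈ B, ‖D z - D a‖ ≤ K * ‖z - a‖ := fun z hz =>
    hconv.norm_image_sub_le_of_norm_fderiv_le (fun y _ => hDd y) hKb haB hz
  -- quadratic Taylor estimate on B
  have hTaylor : ∀ x ∈ B, |f x - f a - D a (x - a)| ≤ K * ‖x - a‖ ^ 2 := by
    intro x hxB
    have hseg : segment ℝ a x ⊆ B := hconv.segment_subset haB hxB
    have hbound : ∀ z ∈ segment ℝ a x, ‖D z - D a‖ ≤ K * ‖x - a‖ := by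
      intro z hz
      have hzB := hseg hz
      obtain ⟨u, t, hu, ht, hut, hzeq⟩ := hz
      have hza : z - a = t • (x - a) := by
        have hu1 : u = 1 - t := by linarith
        rw [← hzeq, hu1]
        module
      have : ‖z - a‖ ≤ ‖x - a‖ := by
        rw [hza, norm_smul, Real.norm_eq_abs, abs_of_nonneg ht]
        nlinarith [norm_nonneg (x - a)]
      exact (hLip z hzB).trans (by nlinarith)
    have := (convex_segment a x).norm_image_sub_le_of_norm_fderiv_le'
      (fun z _ => hfd z) (fun z hz => by
        have := hbound z hz
        simpa [hD] using this) (left_mem_segment ℝ a x) (right_mem_segment ℝ a x)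
    calc |f x - f a - D a (x - a)| ≤ K * ‖x - a‖ * ‖x - a‖ := by
          simpa [Real.norm_eq_abs] using this
      _ = K * ‖x - a‖ ^ 2 := by ring
  -- geometry: ‖x-a‖² ≤ 2(ρ² - ⟪a-c, x-c⟫)
  have hgeom : ∀ x ∈ B, ‖x - a‖ ^ 2 ≤ 2 * (ρ ^ 2 - ⟪a - c, x - c⟫) := by
    intro x hxB
    have hxc : ‖x - c‖ ≤ ρ := by
      simpa [hB, Metric.mem_closedBall, dist_eq_norm] using hxB
    have hexp : ‖x - a‖ ^ 2 = ‖x - c‖ ^ 2 - 2 * ⟪a - c, x - c⟫ + ρ ^ 2 := by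
      have h1 : x - a = (x - c) - (a - c) := by abel
      rw [h1, ← real_inner_self_eq_norm_sq]
      rw [inner_sub_sub_self]
      rw [real_inner_self_eq_norm_sq, real_inner_self_eq_norm_sq, ha,
        real_inner_comm (x - c) (a - c)]
      ring
    nlinarith [norm_nonneg (x - c)]
  -- build v and b
  set w : EuclideanSpace ℝ (Fin n) := (InnerProductSpace.toDual ℝ _).symm (D a) with hw
  have hwapp : ∀ y : EuclideanSpace ℝ (Fin n), ⟪w, y⟫ = D a y := by
    intro y
    simp [hw, InnerProductSpace.toDual_symm_apply]
  refine ⟨w - (2 * K) • (a - c), f a - D a a + 2 * K * ρ ^ 2 + 2 * K * ⟪a - c, c⟫, ?_, ?_⟩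
  · -- g(a) = f(a)
    rw [inner_sub_left, hwapp, real_inner_smul_left]
    have hac : ⟪a - c, a⟫ - ⟪a - c, c⟫ = ρ ^ 2 := by
      rw [← inner_sub_right, real_inner_self_eq_norm_sq, ha]
    linear_combination (2 * K) * hac
  · intro x hxB
    have h1 := hTaylor x hxB
    have h2 := hgeom x hxB
    rw [inner_sub_left, hwapp, real_inner_smul_left]
    have hDx : D a (x - a) = D a x - D a a := by
      simp [map_sub]
    have hax : ⟪a - c, x - c⟫ = ⟪a - c, x⟫ - ⟪a - c, c⟫ := by
      rw [← inner_sub_right]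
    have habs : f x - f a - D a (x - a) ≤ K * ‖x - a‖ ^ 2 := (abs_le.mp h1).2
    rw [hDx] at habs
    have h2' : K * ‖x - a‖ ^ 2 ≤ K * (2 * (ρ ^ 2 - ⟪a - c, x - c⟫)) :=
      mul_le_mul_of_nonneg_left h2 hKnn
    rw [hax] at h2'
    linarith
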